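/- Let ε ∈ (0, 1/2) and α ∈ (0, 1). Then the quantity δ₀ = ε · λ(1 - (1-α)·ρ(1-α)) is strictly positive, and every fixed point x ∈ [0,1] of x ↦ f(x, ε, α) satisfies x ≥ δ₀. In particular, the asymptotic symbol error probability of the peeling decoder with missing connections for the irregular ensemble cannot be driven to zero. -/

import Mathlib

/-- Variable-node degree distribution polynomial `λ(y) = Σ_{d=2}^{Dv} λ_d y^(d-1)`. -/
noncomputable def degPoly (D : ℕ) (c : ℕ → ℝ) (y : ℝ) : ℝ :=
  ∑ d ∈ Finset.Icc 2 D, c d * y ^ (d - 1)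

/-- Density evolution map of the peeling decoder with missing connections for the
irregular LDPC ensemble with degree distributions `λ` and `ρ` over the BEC. -/
noncomputable def peelDEirr (Dv Dc : ℕ) (lam rho : ℕ → ℝ) (x ε α : ℝ) : ℝ :=
  ε * degPoly Dv lam (α + (1 - α) * (1 - degPoly Dc rho ((1 - x) * (1 - α))))

lemma degPoly_nonneg (D : ℕ) (c : ℕ → ℝ) (hc : ∀ d, 0 ≤ c d) {y : ℝ} (hy : 0 ≤ y) :
    0 ≤ degPoly D c y :=
  Finset.sum_nonneg fun d _ => mul_nonneg (hc d) (pow_nonneg hy _)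

lemma degPoly_le_one (D : ℕ) (c : ℕ → ℝ) (hc : ∀ d, 0 ≤ c d)
    (hc1 : ∑ d ∈ Finset.Icc 2 D, c d = 1) {y : ℝ} (hy0 : 0 ≤ y) (hy1 : y ≤ 1) :
    degPoly D c y ≤ 1 := by
  rw [← hc1]
  refine Finset.sum_le_sum fun d _ => ?_
  calc c d * y ^ (d - 1) ≤ c d * 1 := by
        exact mul_le_mul_of_nonneg_left (pow_le_one₀ hy0 hy1) (hc d)
    _ = c d := mul_one _

lemma degPoly_mono (D : ℕ) (c : ℕ → ℝ) (hc : ∀ d, 0 ≤ c d) {y z : ℝ}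
    (hy : 0 ≤ y) (hyz : y ≤ z) : degPoly D c y ≤ degPoly D c z :=
  Finset.sum_le_sum fun d _ =>
    mul_le_mul_of_nonneg_left (pow_le_pow_left₀ hy hyz _) (hc d)

lemma degPoly_lower (D : ℕ) (c : ℕ → ℝ) (hc : ∀ d, 0 ≤ c d)
    (hc1 : ∑ d ∈ Finset.Icc 2 D, c d = 1) {y : ℝ} (hy0 : 0 ≤ y) (hy1 : y ≤ 1) :
    y ^ (D - 1) ≤ degPoly D c y := by
  calc y ^ (D - 1) = ∑ d ∈ Finset.Icc 2 D, c d * y ^ (D - 1) := by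
        rw [← Finset.sum_mul, hc1, one_mul]
    _ ≤ degPoly D c y := by
        refine Finset.sum_le_sum fun d hd => ?_
        have hd' : d ≤ D := (Finset.mem_Icc.mp hd).2
        exact mul_le_mul_of_nonneg_left
          (pow_le_pow_of_le_one hy0 hy1 (Nat.sub_le_sub_right hd' 1)) (hc d)

theorem peelDEirr_fixedPoint_lower_bound
    (Dv Dc : ℕ) (hDv : 2 ≤ Dv) (hDc : 2 ≤ Dc) (lam rho : ℕ → ℝ)
    (hlam : ∀ d, 0 ≤ lam d) (hrho : ∀ d, 0 ≤ rho d)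
    (hlam1 : ∑ d ∈ Finset.Icc 2 Dv, lam d = 1)
    (hrho1 : ∑ d ∈ Finset.Icc 2 Dc, rho d = 1)
    (ε α : ℝ) (hε : ε ∈ Set.Ioo (0 : ℝ) (1 / 2)) (hα : α ∈ Set.Ioo (0 : ℝ) 1) :
    0 < ε * degPoly Dv lam (1 - (1 - α) * degPoly Dc rho (1 - α)) ∧
    ∀ x ∈ Set.Icc (0 : ℝ) 1, x = peelDEirr Dv Dc lam rho x ε α →
      ε * degPoly Dv lam (1 - (1 - α) * degPoly Dc rho (1 - α)) ≤ x := by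
  obtain ⟨hε0, hε12⟩ := hε
  obtain ⟨hα0, hα1⟩ := hα
  have h1α0 : (0:ℝ) ≤ 1 - α := by linarith
  have h1α1 : (1:ℝ) - α ≤ 1 := by linarith
  have hρ0 : 0 ≤ degPoly Dc rho (1 - α) := degPoly_nonneg _ _ hrho h1α0
  have hρ1 : degPoly Dc rho (1 - α) ≤ 1 := degPoly_le_one _ _ hrho hrho1 h1α0 h1α1
  set t := 1 - (1 - α) * degPoly Dc rho (1 - α) with ht
  have ht0 : 0 < t := by
    have : (1 - α) * degPoly Dc rho (1 - α) ≤ (1 - α) * 1 :=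
      mul_le_mul_of_nonneg_left hρ1 h1α0
    have : (1 - α) * degPoly Dc rho (1 - α) < 1 := by nlinarith
    simp only [ht]; linarith
  have ht1 : t ≤ 1 := by
    have : 0 ≤ (1 - α) * degPoly Dc rho (1 - α) := mul_nonneg h1α0 hρ0
    simp only [ht]; linarith
  have hlpos : 0 < degPoly Dv lam t := lt_of_lt_of_le (pow_pos ht0 _)
    (degPoly_lower _ _ hlam hlam1 ht0.le ht1)
  refine ⟨mul_pos hε0 hlpos, fun x hx hfix => ?_⟩
  obtain ⟨hx0, hx1⟩ := hx
  -- u := (1-x)(1-α) ∈ [0, 1-α]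
  have hu0 : 0 ≤ (1 - x) * (1 - α) := mul_nonneg (by linarith) h1α0
  have hu1 : (1 - x) * (1 - α) ≤ 1 - α := by nlinarith
  have hρu : degPoly Dc rho ((1 - x) * (1 - α)) ≤ degPoly Dc rho (1 - α) :=
    degPoly_mono _ _ hrho hu0 hu1
  have ha : t ≤ α + (1 - α) * (1 - degPoly Dc rho ((1 - x) * (1 - α))) := by
    simp only [ht]; nlinarith
  have hlmono : degPoly Dv lam t ≤
      degPoly Dv lam (α + (1 - α) * (1 - degPoly Dc rho ((1 - x) * (1 - α)))) :=
    degPoly_mono _ _ hlam ht0.le ha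
  rw [hfix, peelDEirr]
  exact mul_le_mul_of_nonneg_left hlmono hε0.le
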